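/- arXiv:2508.19930 — 4 statements merged into one kernel-verified Lean document; each statement's English description precedes it below -/
import Mathlib

section
/- Let A=((a,b),(c,d)) ∈ SL(2,ℂ) and let ω ∈ 𝕊²∖{N} with z = 𝒮(ω) such that cz+d ≠ 0. Then A·H(1,ω)·A* = ((|az+b|² + |cz+d|²)/(1+|z|²)) · H(1, τ_A(ω)), where A* denotes the conjugate transpose of A. -/
open MeasureTheory
open scoped Classical

noncomputable section

/-- Squared Euclidean norm on `ℝ²`. -/
def sq2 (x : ℝ × ℝ) : ℝ := x.1 ^ 2 + x.2 ^ 2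

/-- Euclidean dot product on `ℝ³`. -/
def dot3 (a b : Fin 3 → ℝ) : ℝ := a 0 * b 0 + a 1 * b 1 + a 2 * b 2

/-- Squared Euclidean norm on `ℝ³`. -/
def norm3sq (a : Fin 3 → ℝ) : ℝ := dot3 a a

/-- Stereographic projection from the north pole. -/
def SP (ω : Fin 3 → ℝ) : ℝ × ℝ := (ω 0 / (1 - ω 2), ω 1 / (1 - ω 2))

/-- Inverse stereographic projection. -/
def SPinv (x : ℝ × ℝ) : Fin 3 → ℝ :=
  ![2 * x.1 / (1 + sq2 x), 2 * x.2 / (1 + sq2 x), (sq2 x - 1) / (1 + sq2 x)]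

/-- Identification `ℝ² ≅ ℂ`. -/
def cx (x : ℝ × ℝ) : ℂ := ⟨x.1, x.2⟩

/-- Identification `ℂ ≅ ℝ²`. -/
def uncx (z : ℂ) : ℝ × ℝ := (z.re, z.im)

/-- The group `SL(2,ℂ)`. -/
abbrev SL2C := Matrix.SpecialLinearGroup (Fin 2) ℂ

/-- The Möbius transformation associated to `A ∈ SL(2,ℂ)`. -/
def TA (A : SL2C) (z : ℂ) : ℂ := (A.1 0 0 * z + A.1 0 1) / (A.1 1 0 * z + A.1 1 1)

/-- The north pole of `𝕊²`. -/
def northPole : Fin 3 → ℝ := ![0, 0, 1]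

/-- The conformal transformation of `𝕊²` induced by `A ∈ SL(2,ℂ)` via stereographic
projection, extended continuously over the poles. -/
def tauA (A : SL2C) (ω : Fin 3 → ℝ) : Fin 3 → ℝ :=
  if ω 2 = 1 then
    if A.1 1 0 = 0 then northPole else SPinv (uncx (A.1 0 0 / A.1 1 0))
  else if A.1 1 0 * cx (SP ω) + A.1 1 1 = 0 then northPole
  else SPinv (uncx (TA A (cx (SP ω))))

/-- The Jacobian `𝒥_{τ_A}(ω) = ((1+|z|²)/(|az+b|²+|cz+d|²))²`, `z = 𝒮(ω)`,
extended continuously over the north pole. -/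
def jacA (A : SL2C) (ω : Fin 3 → ℝ) : ℝ :=
  if ω 2 = 1 then (1 / (Complex.normSq (A.1 0 0) + Complex.normSq (A.1 1 0))) ^ 2
  else
    ((1 + Complex.normSq (cx (SP ω))) /
        (Complex.normSq (A.1 0 0 * cx (SP ω) + A.1 0 1) +
          Complex.normSq (A.1 1 0 * cx (SP ω) + A.1 1 1))) ^ 2

/-- `∫_{𝕊²} f dω = (1/π) ∫_{ℝ²} f(𝒮⁻¹(x)) (1+|x|²)⁻² dx`, the integral against the
normalized surface measure of `𝕊²`, written in stereographic coordinates. -/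
def sphInt {E : Type*} [NormedAddCommGroup E] [NormedSpace ℝ E]
    (f : (Fin 3 → ℝ) → E) : E :=
  (1 / Real.pi) • ∫ x : ℝ × ℝ, ((1 + sq2 x)⁻¹) ^ 2 • f (SPinv x)

/-- Integrability of `f : 𝕊² → ℝ` with respect to the normalized surface measure,
expressed in stereographic coordinates. -/
def SphIntegrable (f : (Fin 3 → ℝ) → ℝ) : Prop :=
  Integrable fun x : ℝ × ℝ => ((1 + sq2 x)⁻¹) ^ 2 * f (SPinv x)

/-- The mass `M_τ = ∫_{𝕊²} 𝒥_τ^{3/2} dω`. -/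
def massA (A : SL2C) : ℝ := sphInt fun ω => jacA A ω ^ (3 / 2 : ℝ)

/-- The center of mass `a_τ = M_τ⁻¹ ∫_{𝕊²} ω 𝒥_τ^{3/2}(ω) dω`. -/
def comA (A : SL2C) : Fin 3 → ℝ :=
  (massA A)⁻¹ • sphInt fun ω => jacA A ω ^ (3 / 2 : ℝ) • ω

/-- The normalizing constant `c_τ = -(1/2) ln M_τ`. -/
def cA (A : SL2C) : ℝ := -(1 / 2) * Real.log (massA A)

/-- `ψ_τ = (3/4) ln 𝒥_τ + c_τ`. -/
def psiA (A : SL2C) (ω : Fin 3 → ℝ) : ℝ := (3 / 4) * Real.log (jacA A ω) + cA A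

/-- `|∇v(x)|²` for `v : ℝ² → ℝ`. -/
def gradSq (v : ℝ × ℝ → ℝ) (x : ℝ × ℝ) : ℝ :=
  fderiv ℝ v x (1, 0) ^ 2 + fderiv ℝ v x (0, 1) ^ 2

/-- The Dirichlet energy `∫_{𝕊²} |∇_{𝕊²} u|² dω = (1/(4π)) ∫_{ℝ²} |∇(u∘𝒮⁻¹)(x)|² dx`. -/
def gradTerm (u : (Fin 3 → ℝ) → ℝ) : ℝ :=
  (1 / (4 * Real.pi)) * ∫ x : ℝ × ℝ, gradSq (fun y => u (SPinv y)) x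

/-- Membership in the Sobolev space `H¹(𝕊²)`. -/
def MemH1 (u : (Fin 3 → ℝ) → ℝ) : Prop :=
  SphIntegrable u ∧ SphIntegrable (fun ω => u ω ^ 2) ∧
    Integrable fun x : ℝ × ℝ => gradSq (fun y => u (SPinv y)) x

/-- The Chang–Gui functional `I_α`. -/
def CG (α : ℝ) (u : (Fin 3 → ℝ) → ℝ) : ℝ :=
  α * gradTerm u + 2 * sphInt u -
    (1 / 2) * Real.log
      ((sphInt fun ω => Real.exp (2 * u ω)) ^ 2 -
        norm3sq (sphInt fun ω => Real.exp (2 * u ω) • ω))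

end

/-- The linear bijection `H : ℝ^{1,3} → Herm(2,ℂ)`. -/
def Hmk (t : ℝ) (q : Fin 3 → ℝ) : Matrix (Fin 2) (Fin 2) ℂ :=
  !![((t + q 2 : ℝ) : ℂ), (q 0 : ℂ) + (q 1 : ℂ) * Complex.I;
     (q 0 : ℂ) - (q 1 : ℂ) * Complex.I, ((t - q 2 : ℝ) : ℂ)]

lemma Hmk_SPinv (v : ℂ) :
    Hmk 1 (SPinv (uncx v)) =
      (2 / (1 + Complex.normSq v) : ℝ) •
        !![(Complex.normSq v : ℂ), v; (starRingEnd ℂ) v, 1] := by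
  have h0 : (0:ℝ) < 1 + Complex.normSq v := by
    have := Complex.normSq_nonneg v; linarith
  have h1 : ((1 : ℂ) + (Complex.normSq v : ℂ)) ≠ 0 := by
    intro hc
    have : ((1 + Complex.normSq v : ℝ) : ℂ) = 0 := by push_cast; linear_combination hc
    exact absurd (Complex.ofReal_eq_zero.mp this) (ne_of_gt h0)
  have h : sq2 (v.re, v.im) = Complex.normSq v := by
    simp [sq2, Complex.normSq_apply]; ring
  have hri : (v.re : ℂ) + (v.im : ℂ) * Complex.I = v := Complex.re_add_im v
  have hconj : (starRingEnd ℂ) v = (v.re : ℂ) - (v.im : ℂ) * Complex.I := by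
    simp [Complex.ext_iff]
  ext i j
  fin_cases i <;> fin_cases j
  · simp only [Hmk, SPinv, uncx, h, Matrix.smul_apply, Complex.real_smul,
      Matrix.cons_val', Matrix.cons_val_zero, Matrix.cons_val_one, Matrix.head_cons,
      Matrix.empty_val', Matrix.cons_val_fin_one, Matrix.head_fin_const, Matrix.of_apply]
    push_cast
    field_simp
    ring
  · simp only [Hmk, SPinv, uncx, h, Matrix.smul_apply, Complex.real_smul,
      Matrix.cons_val', Matrix.cons_val_zero, Matrix.cons_val_one, Matrix.head_cons,
      Matrix.empty_val', Matrix.cons_val_fin_one, Matrix.head_fin_const, Matrix.of_apply]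
    push_cast
    field_simp
    linear_combination hri
  · simp only [Hmk, SPinv, uncx, h, Matrix.smul_apply, Complex.real_smul,
      Matrix.cons_val', Matrix.cons_val_zero, Matrix.cons_val_one, Matrix.head_cons,
      Matrix.empty_val', Matrix.cons_val_fin_one, Matrix.head_fin_const, Matrix.of_apply]
    push_cast
    field_simp
    linear_combination (-1 : ℂ) * hconj
  · simp only [Hmk, SPinv, uncx, h, Matrix.smul_apply, Complex.real_smul,
      Matrix.cons_val', Matrix.cons_val_zero, Matrix.cons_val_one, Matrix.head_cons,
      Matrix.empty_val', Matrix.cons_val_fin_one, Matrix.head_fin_const, Matrix.of_apply]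
    push_cast
    field_simp
    ring

lemma Hmk_sphere (ω : Fin 3 → ℝ) (hω : norm3sq ω = 1) (hN : ω 2 ≠ 1) :
    Hmk 1 ω = (1 - ω 2 : ℝ) •
      !![(Complex.normSq (cx (SP ω)) : ℂ), cx (SP ω);
         (starRingEnd ℂ) (cx (SP ω)), 1] := by
  have h2 : (1:ℝ) - ω 2 ≠ 0 := sub_ne_zero_of_ne (Ne.symm hN)
  unfold norm3sq dot3 at hω
  have h2c : (1:ℂ) - ((ω 2 : ℝ) : ℂ) ≠ 0 := by
    intro hc
    have : ((1 - ω 2 : ℝ) : ℂ) = 0 := by push_cast; linear_combination hc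
    exact h2 (Complex.ofReal_eq_zero.mp this)
  have hωc : ((ω 0 : ℝ) : ℂ) * (ω 0 : ℝ) + ((ω 1 : ℝ) : ℂ) * (ω 1 : ℝ) +
      ((ω 2 : ℝ) : ℂ) * (ω 2 : ℝ) = 1 := by exact_mod_cast congrArg (fun r : ℝ => (r : ℂ)) hω
  have hz : cx (SP ω) = ((ω 0 / (1 - ω 2) : ℝ) : ℂ) + ((ω 1 / (1 - ω 2) : ℝ) : ℂ) * Complex.I := by
    rw [show cx (SP ω) = Complex.mk (ω 0 / (1 - ω 2)) (ω 1 / (1 - ω 2)) from rfl]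
    apply Complex.mk_eq_add_mul_I
  have hns : Complex.normSq (cx (SP ω)) = (ω 0 / (1 - ω 2))^2 + (ω 1 / (1 - ω 2))^2 := by
    rw [show cx (SP ω) = Complex.mk (ω 0 / (1 - ω 2)) (ω 1 / (1 - ω 2)) from rfl,
      Complex.normSq_mk]
    ring
  have e00 : (1 + ω 2) = (1 - ω 2) * Complex.normSq (cx (SP ω)) := by
    rw [hns]
    field_simp
    linear_combination (-1 : ℝ) * hω
  have e00c : ((1 + ω 2 : ℝ) : ℂ) = ((1 - ω 2 : ℝ) : ℂ) * (Complex.normSq (cx (SP ω)) : ℂ) := by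
    rw [← Complex.ofReal_mul]
    exact_mod_cast congrArg (fun r : ℝ => (r : ℂ)) e00
  ext i j
  fin_cases i <;> fin_cases j
  · simp [Hmk, Matrix.smul_apply, Complex.real_smul]
    push_cast at e00c ⊢
    linear_combination e00c
  · simp [Hmk, Matrix.smul_apply, Complex.real_smul, hz]
    field_simp
  · simp [Hmk, Matrix.smul_apply, Complex.real_smul, hz, map_add, map_mul,
      Complex.conj_I, Complex.conj_ofReal]
    field_simp
    ring
  · simp [Hmk, Matrix.smul_apply, Complex.real_smul]

lemma conj_mul_lemma (A : SL2C) (z : ℂ) :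
    A.1 * !![(Complex.normSq z : ℂ), z; (starRingEnd ℂ) z, 1] *
        Matrix.conjTranspose A.1 =
      !![(A.1 0 0 * z + A.1 0 1) * (starRingEnd ℂ) (A.1 0 0 * z + A.1 0 1),
         (A.1 0 0 * z + A.1 0 1) * (starRingEnd ℂ) (A.1 1 0 * z + A.1 1 1);
         (A.1 1 0 * z + A.1 1 1) * (starRingEnd ℂ) (A.1 0 0 * z + A.1 0 1),
         (A.1 1 0 * z + A.1 1 1) * (starRingEnd ℂ) (A.1 1 0 * z + A.1 1 1)] := by
  have hz : (Complex.normSq z : ℂ) = z * (starRingEnd ℂ) z := (Complex.mul_conj z).symm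
  ext i j
  fin_cases i <;> fin_cases j <;>
    · simp [Matrix.mul_apply, Fin.sum_univ_two, Matrix.conjTranspose_apply, hz,
        Complex.star_def, map_add, map_mul]
      ring

/-- `A · H(1,ω) · A* = ((|az+b|² + |cz+d|²)/(1+|z|²)) · H(1, τ_A(ω))`. -/
theorem conjugation_identity (A : SL2C) (ω : Fin 3 → ℝ) (hω : norm3sq ω = 1)
    (hN : ω 2 ≠ 1) (hd : A.1 1 0 * cx (SP ω) + A.1 1 1 ≠ 0) :
    A.1 * Hmk 1 ω * Matrix.conjTranspose A.1 =
      (((Complex.normSq (A.1 0 0 * cx (SP ω) + A.1 0 1) +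
            Complex.normSq (A.1 1 0 * cx (SP ω) + A.1 1 1)) /
          (1 + Complex.normSq (cx (SP ω)))) : ℝ) • Hmk 1 (tauA A ω) := by
  have h2 : (1:ℝ) - ω 2 ≠ 0 := sub_ne_zero_of_ne (Ne.symm hN)
  set z := cx (SP ω) with hzdef
  set a := A.1 0 0 with hadef
  set b := A.1 0 1 with hbdef
  set c := A.1 1 0 with hcdef
  set d := A.1 1 1 with hddef
  have htau : tauA A ω = SPinv (uncx (TA A z)) := by
    rw [tauA, if_neg hN, if_neg hd]
  set w := TA A z with hwdef
  have hw : w * (c * z + d) = a * z + b := by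
    rw [hwdef, TA]; exact div_mul_cancel₀ _ hd
  have hwc : (starRingEnd ℂ) w * (starRingEnd ℂ) (c * z + d) =
      (starRingEnd ℂ) (a * z + b) := by rw [← map_mul, hw]
  have hmpos : 0 < Complex.normSq (c * z + d) := Complex.normSq_pos.mpr hd
  have hm : Complex.normSq (c * z + d) ≠ 0 := hmpos.ne'
  have hnpos : 0 ≤ Complex.normSq (a * z + b) := Complex.normSq_nonneg _
  have hnw : Complex.normSq w =
      Complex.normSq (a * z + b) / Complex.normSq (c * z + d) := by
    rw [hwdef, TA, Complex.normSq_div]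
  have hsum : Complex.normSq (a * z + b) + Complex.normSq (c * z + d) ≠ 0 := by
    linarith
  have h1w : (1:ℝ) + Complex.normSq w ≠ 0 := by
    have := Complex.normSq_nonneg w; linarith
  have hmc : (c * z + d) * ((starRingEnd ℂ) c * (starRingEnd ℂ) z + (starRingEnd ℂ) d) =
      (Complex.normSq (c * z + d) : ℂ) := by simpa using Complex.mul_conj (c * z + d)
  have hwc' : (starRingEnd ℂ) w * ((starRingEnd ℂ) c * (starRingEnd ℂ) z + (starRingEnd ℂ) d) =
      (starRingEnd ℂ) a * (starRingEnd ℂ) z + (starRingEnd ℂ) b := by simpa using hwc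
  have hns : Complex.normSq z = (ω 0 / (1 - ω 2))^2 + (ω 1 / (1 - ω 2))^2 := by
    rw [hzdef, show cx (SP ω) = Complex.mk (ω 0 / (1 - ω 2)) (ω 1 / (1 - ω 2)) from rfl,
      Complex.normSq_mk]
    ring
  have hs : 1 + Complex.normSq z = 2 / (1 - ω 2) := by
    unfold norm3sq dot3 at hω
    have e00 : 1 + ω 2 = (1 - ω 2) * Complex.normSq z := by
      rw [hns]; field_simp; linear_combination (-1 : ℝ) * hω
    rw [eq_div_iff h2]
    linear_combination -e00
  have hWN : (!![(a * z + b) * (starRingEnd ℂ) (a * z + b),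
         (a * z + b) * (starRingEnd ℂ) (c * z + d);
         (c * z + d) * (starRingEnd ℂ) (a * z + b),
         (c * z + d) * (starRingEnd ℂ) (c * z + d)] : Matrix (Fin 2) (Fin 2) ℂ) =
      (Complex.normSq (c * z + d)) •
        !![(Complex.normSq w : ℂ), w; (starRingEnd ℂ) w, 1] := by
    ext i j
    fin_cases i <;> fin_cases j
    · simp [Matrix.smul_apply, Complex.real_smul]
      rw [← Complex.ofReal_mul, hnw]
      rw [show Complex.normSq (c * z + d) *
          (Complex.normSq (a * z + b) / Complex.normSq (c * z + d)) =
          Complex.normSq (a * z + b) by field_simp]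
      simpa using Complex.mul_conj (a * z + b)
    · simp [Matrix.smul_apply, Complex.real_smul]
      linear_combination (-((starRingEnd ℂ) c * (starRingEnd ℂ) z + (starRingEnd ℂ) d)) * hw +
        w * hmc
    · simp [Matrix.smul_apply, Complex.real_smul]
      linear_combination (c * z + d) * hwc'.symm + (starRingEnd ℂ) w * hmc
    · simp [Matrix.smul_apply, Complex.real_smul]
      simpa using hmc
  rw [Hmk_sphere ω hω hN, htau, Hmk_SPinv, Matrix.mul_smul, Matrix.smul_mul,
    conj_mul_lemma, ← hadef, ← hbdef, ← hcdef, ← hddef, ← hzdef, hWN, smul_smul, smul_smul]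
  congr 1
  rw [hs, hnw]
  field_simp
  rw [mul_comm z a, add_comm (Complex.normSq (c * z + d)), div_self hsum]
end

section
/- For every β ∈ ℝ², (1/π) ∫_{ℝ²} (1+|y−β|²)·(1+|y|²)^{−3} dy = 1 + |β|²/2. Consequently, if p=(p₁,p₂,p₃) ∈ 𝕊²∖{N} and β = 𝒮(p), the mass of the translation τ_p equals ∫_{𝕊²} 𝒥_{τ_p}(ω)^{3/2} dω = (1/2)·(3−p₃)/(1−p₃). -/
open MeasureTheory
open scoped Classical

/-- Jacobian of the translation by `β` (given by `x ↦ x + β` in stereographic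
coordinates). -/
noncomputable def jacTr (β : ℝ × ℝ) (ω : Fin 3 → ℝ) : ℝ :=
  ((1 + sq2 (SP ω)) / (1 + sq2 (SP ω + β))) ^ 2


namespace MT7Aux
open Set Real Filter

lemma sq2_nonneg (x : ℝ × ℝ) : 0 ≤ sq2 x := by unfold sq2; positivity
lemma one_add_sq2_pos (x : ℝ × ℝ) : 0 < 1 + sq2 x := by have := sq2_nonneg x; linarith
lemma continuous_sq2 : Continuous sq2 := by
  unfold sq2; fun_prop

lemma normsq_le_sq2 (y : ℝ × ℝ) : ‖y‖ ^ 2 ≤ sq2 y := by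
  rw [Prod.norm_def]
  rcases max_cases ‖y.1‖ ‖y.2‖ with ⟨h, _⟩ | ⟨h, _⟩ <;> rw [h] <;>
    simp only [Real.norm_eq_abs, sq_abs, sq2] <;> nlinarith [sq_nonneg y.1, sq_nonneg y.2]

lemma majorant_integrable :
    Integrable (fun y : ℝ × ℝ => ((1 : ℝ) + ‖y‖ ^ 2) ^ (-(4:ℝ) / 2)) := by
  apply integrable_rpow_neg_one_add_norm_sq
  simp; norm_num

lemma integrable_of_le_majorant {f : ℝ × ℝ → ℝ} (hc : Continuous f)
    (hb : ∀ y, |f y| ≤ (((1:ℝ) + sq2 y) ^ 2)⁻¹) : Integrable f := by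
  refine majorant_integrable.mono' hc.aestronglyMeasurable (Eventually.of_forall fun y => ?_)
  have h1 : (0:ℝ) < 1 + ‖y‖ ^ 2 := by positivity
  have h2 : ((1 : ℝ) + ‖y‖ ^ 2) ^ (-(4:ℝ) / 2) = (((1:ℝ) + ‖y‖ ^ 2) ^ 2)⁻¹ := by
    rw [show (-(4:ℝ) / 2) = -((2:ℕ):ℝ) by norm_num, Real.rpow_neg h1.le, Real.rpow_natCast]
  rw [Real.norm_eq_abs, h2]
  refine le_trans (hb y) ?_
  gcongr
  · linarith [normsq_le_sq2 y]

lemma abs_fst_le (y : ℝ × ℝ) : |y.1| ≤ 1 + sq2 y := by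
  simp only [sq2]; nlinarith [sq_nonneg (|y.1| - 1), sq_abs y.1, sq_nonneg y.2, abs_nonneg y.1]
lemma abs_snd_le (y : ℝ × ℝ) : |y.2| ≤ 1 + sq2 y := by
  simp only [sq2]; nlinarith [sq_nonneg (|y.2| - 1), sq_abs y.2, sq_nonneg y.1, abs_nonneg y.2]

lemma int2 : Integrable (fun y : ℝ × ℝ => (((1:ℝ) + sq2 y) ^ 2)⁻¹) := by
  apply integrable_of_le_majorant
  · exact ((continuous_const.add continuous_sq2).pow 2).inv₀
      (fun y => by have := one_add_sq2_pos y; exact pow_ne_zero _ this.ne')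
  · intro y
    have := one_add_sq2_pos y
    rw [abs_of_nonneg (by positivity)]

lemma int3 : Integrable (fun y : ℝ × ℝ => (((1:ℝ) + sq2 y) ^ 3)⁻¹) := by
  apply integrable_of_le_majorant
  · exact ((continuous_const.add continuous_sq2).pow 3).inv₀
      (fun y => by have := one_add_sq2_pos y; exact pow_ne_zero _ this.ne')
  · intro y
    have h := one_add_sq2_pos y
    rw [abs_of_nonneg (by positivity)]
    have h1 : ((1:ℝ) + sq2 y) ^ 2 ≤ ((1:ℝ) + sq2 y) ^ 3 := by
      nlinarith [sq2_nonneg y]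
    exact inv_anti₀ (by positivity) h1

lemma intodd1 : Integrable (fun y : ℝ × ℝ => y.1 * (((1:ℝ) + sq2 y) ^ 3)⁻¹) := by
  apply integrable_of_le_majorant
  · exact continuous_fst.mul (((continuous_const.add continuous_sq2).pow 3).inv₀
      (fun y => by have := one_add_sq2_pos y; exact pow_ne_zero _ this.ne'))
  · intro y
    have h := one_add_sq2_pos y
    rw [abs_mul, abs_of_nonneg (a := (((1:ℝ) + sq2 y) ^ 3)⁻¹) (by positivity)]
    calc |y.1| * (((1:ℝ) + sq2 y) ^ 3)⁻¹ ≤ (1 + sq2 y) * (((1:ℝ) + sq2 y) ^ 3)⁻¹ := by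
          gcongr; exact abs_fst_le y
      _ = (((1:ℝ) + sq2 y) ^ 2)⁻¹ := by field_simp

lemma intodd2 : Integrable (fun y : ℝ × ℝ => y.2 * (((1:ℝ) + sq2 y) ^ 3)⁻¹) := by
  apply integrable_of_le_majorant
  · exact continuous_snd.mul (((continuous_const.add continuous_sq2).pow 3).inv₀
      (fun y => by have := one_add_sq2_pos y; exact pow_ne_zero _ this.ne'))
  · intro y
    have h := one_add_sq2_pos y
    rw [abs_mul, abs_of_nonneg (a := (((1:ℝ) + sq2 y) ^ 3)⁻¹) (by positivity)]
    calc |y.2| * (((1:ℝ) + sq2 y) ^ 3)⁻¹ ≤ (1 + sq2 y) * (((1:ℝ) + sq2 y) ^ 3)⁻¹ := by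
          gcongr; exact abs_snd_le y
      _ = (((1:ℝ) + sq2 y) ^ 2)⁻¹ := by field_simp

lemma Jodd1 : ∫ y : ℝ × ℝ, y.1 * (((1:ℝ) + sq2 y) ^ 3)⁻¹ = 0 := by
  have h : ∫ y : ℝ × ℝ, (fun y : ℝ × ℝ => y.1 * (((1:ℝ) + sq2 y) ^ 3)⁻¹) (-y)
      = ∫ y : ℝ × ℝ, y.1 * (((1:ℝ) + sq2 y) ^ 3)⁻¹ :=
    integral_neg_eq_self (fun y : ℝ × ℝ => y.1 * (((1:ℝ) + sq2 y) ^ 3)⁻¹) volume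
  have heq : ∀ y : ℝ × ℝ, (fun y : ℝ × ℝ => y.1 * (((1:ℝ) + sq2 y) ^ 3)⁻¹) (-y)
      = -(y.1 * (((1:ℝ) + sq2 y) ^ 3)⁻¹) := by
    intro y; simp [sq2]
  simp only [heq, integral_neg] at h
  linarith

lemma Jodd2 : ∫ y : ℝ × ℝ, y.2 * (((1:ℝ) + sq2 y) ^ 3)⁻¹ = 0 := by
  have h : ∫ y : ℝ × ℝ, (fun y : ℝ × ℝ => y.2 * (((1:ℝ) + sq2 y) ^ 3)⁻¹) (-y)
      = ∫ y : ℝ × ℝ, y.2 * (((1:ℝ) + sq2 y) ^ 3)⁻¹ :=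
    integral_neg_eq_self (fun y : ℝ × ℝ => y.2 * (((1:ℝ) + sq2 y) ^ 3)⁻¹) volume
  have heq : ∀ y : ℝ × ℝ, (fun y : ℝ × ℝ => y.2 * (((1:ℝ) + sq2 y) ^ 3)⁻¹) (-y)
      = -(y.2 * (((1:ℝ) + sq2 y) ^ 3)⁻¹) := by
    intro y; simp [sq2]
  simp only [heq, integral_neg] at h
  linarith


lemma K2 : ∫ r in Ioi (0:ℝ), r * (((1:ℝ) + r ^ 2) ^ 2)⁻¹ = 1 / 2 := by
  have hderiv : ∀ r ∈ Ici (0:ℝ), HasDerivAt (fun r : ℝ => -(2 * (1 + r ^ 2))⁻¹)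
      (r * (((1:ℝ) + r ^ 2) ^ 2)⁻¹) r := by
    intro r _
    have h0 : (2 : ℝ) * (1 + r ^ 2) ≠ 0 := by positivity
    have h1 : HasDerivAt (fun r : ℝ => 2 * (1 + r ^ 2)) (2 * (2 * r ^ 1)) r :=
      (((hasDerivAt_pow 2 r).const_add 1).const_mul 2)
    have h2 : HasDerivAt (fun r : ℝ => -(2 * (1 + r ^ 2))⁻¹) _ r := (h1.inv h0).neg
    convert h2 using 1
    field_simp
  have htend : Tendsto (fun r : ℝ => -(2 * (1 + r ^ 2))⁻¹) atTop (nhds 0) := by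
    rw [show (0:ℝ) = -0 by norm_num]
    apply Tendsto.neg
    apply Tendsto.inv_tendsto_atTop
    apply Tendsto.const_mul_atTop (by norm_num : (0:ℝ) < 2)
    exact tendsto_atTop_add_const_left _ _ (tendsto_pow_atTop two_ne_zero)
  have := integral_Ioi_of_hasDerivAt_of_nonneg' hderiv
    (fun r hr => by have : (0:ℝ) < r := hr; positivity) htend
  rw [this]; norm_num

lemma K3 : ∫ r in Ioi (0:ℝ), r * (((1:ℝ) + r ^ 2) ^ 3)⁻¹ = 1 / 4 := by
  have hderiv : ∀ r ∈ Ici (0:ℝ), HasDerivAt (fun r : ℝ => -(4 * (1 + r ^ 2) ^ 2)⁻¹)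
      (r * (((1:ℝ) + r ^ 2) ^ 3)⁻¹) r := by
    intro r _
    have h0 : (4 : ℝ) * (1 + r ^ 2) ^ 2 ≠ 0 := by positivity
    have h1 : HasDerivAt (fun r : ℝ => 4 * (1 + r ^ 2) ^ 2)
        (4 * (2 * (1 + r ^ 2) ^ 1 * (2 * r ^ 1))) r :=
      ((((hasDerivAt_pow 2 r).const_add 1).pow 2).const_mul 4)
    have h2 : HasDerivAt (fun r : ℝ => -(4 * (1 + r ^ 2) ^ 2)⁻¹) _ r := (h1.inv h0).neg
    convert h2 using 1
    field_simp
    ring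
  have htend : Tendsto (fun r : ℝ => -(4 * (1 + r ^ 2) ^ 2)⁻¹) atTop (nhds 0) := by
    rw [show (0:ℝ) = -0 by norm_num]
    apply Tendsto.neg
    apply Tendsto.inv_tendsto_atTop
    apply Tendsto.const_mul_atTop (by norm_num : (0:ℝ) < 4)
    exact (tendsto_pow_atTop two_ne_zero).comp
      (tendsto_atTop_add_const_left _ _ (tendsto_pow_atTop two_ne_zero))
  have := integral_Ioi_of_hasDerivAt_of_nonneg' hderiv
    (fun r hr => by have : (0:ℝ) < r := hr; positivity) htend
  rw [this]; norm_num

lemma polar_aux (n : ℕ) (c : ℝ) (hK : ∫ r in Ioi (0:ℝ), r * (((1:ℝ) + r ^ 2) ^ n)⁻¹ = c) :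
    ∫ y : ℝ × ℝ, (((1:ℝ) + sq2 y) ^ n)⁻¹ = 2 * π * c := by
  rw [← integral_comp_polarCoord_symm]
  have h1 : ∀ p ∈ polarCoord.target,
      p.1 • (((1:ℝ) + sq2 (polarCoord.symm p)) ^ n)⁻¹
        = (fun r => r * (((1:ℝ) + r ^ 2) ^ n)⁻¹) p.1 * (fun _ : ℝ => (1:ℝ)) p.2 := by
    intro p _
    have hsq : sq2 (polarCoord.symm p) = p.1 ^ 2 := by
      rw [polarCoord_symm_apply]
      simp only [sq2]
      linear_combination (p.1 ^ 2) * (sin_sq_add_cos_sq p.2)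
    rw [hsq]
    simp [smul_eq_mul]
  rw [setIntegral_congr_fun polarCoord.open_target.measurableSet h1, polarCoord_target,
    Measure.volume_eq_prod, ← Measure.prod_restrict]
  rw [MeasureTheory.integral_prod_mul (fun r : ℝ => r * (((1:ℝ) + r ^ 2) ^ n)⁻¹)
    (fun _ : ℝ => (1:ℝ)), hK]
  simp only [integral_const, MeasurableSet.univ, Measure.restrict_apply, Set.univ_inter,
    Real.volume_Ioo, smul_eq_mul, mul_one]
  rw [measureReal_restrict_apply_univ, Real.volume_real_Ioo_of_le (by have := Real.pi_pos; linarith : (-π:ℝ) ≤ π)]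
  ring

lemma I2 : ∫ y : ℝ × ℝ, (((1:ℝ) + sq2 y) ^ 2)⁻¹ = π := by
  rw [polar_aux 2 _ K2]; ring
lemma I3 : ∫ y : ℝ × ℝ, (((1:ℝ) + sq2 y) ^ 3)⁻¹ = π / 2 := by
  rw [polar_aux 3 _ K3]; ring

lemma part1 (β : ℝ × ℝ) :
    (1 / Real.pi) * ∫ y : ℝ × ℝ, (1 + sq2 (y - β)) * ((1 + sq2 y)⁻¹) ^ 3
      = 1 + sq2 β / 2 := by
  have hpt : ∀ y : ℝ × ℝ, (1 + sq2 (y - β)) * ((1 + sq2 y)⁻¹) ^ 3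
      = (((1:ℝ) + sq2 y) ^ 2)⁻¹ + (sq2 β * (((1:ℝ) + sq2 y) ^ 3)⁻¹
        + ((-2 * β.1) * (y.1 * (((1:ℝ) + sq2 y) ^ 3)⁻¹)
          + (-2 * β.2) * (y.2 * (((1:ℝ) + sq2 y) ^ 3)⁻¹))) := by
    intro y
    have h := one_add_sq2_pos y
    have hne : (1:ℝ) + sq2 y ≠ 0 := ne_of_gt h
    simp only [sq2, Prod.fst_sub, Prod.snd_sub] at *
    field_simp
    ring
  rw [show (∫ y : ℝ × ℝ, (1 + sq2 (y - β)) * ((1 + sq2 y)⁻¹) ^ 3)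
      = ∫ y : ℝ × ℝ, ((((1:ℝ) + sq2 y) ^ 2)⁻¹ + (sq2 β * (((1:ℝ) + sq2 y) ^ 3)⁻¹
        + ((-2 * β.1) * (y.1 * (((1:ℝ) + sq2 y) ^ 3)⁻¹)
          + (-2 * β.2) * (y.2 * (((1:ℝ) + sq2 y) ^ 3)⁻¹)))) from by
    exact integral_congr_ae (Eventually.of_forall hpt)]
  have e3 : (∫ y : ℝ × ℝ, ((-2 * β.1) * (y.1 * (((1:ℝ) + sq2 y) ^ 3)⁻¹)
      + (-2 * β.2) * (y.2 * (((1:ℝ) + sq2 y) ^ 3)⁻¹)))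
      = (-2 * β.1) * (∫ y : ℝ × ℝ, y.1 * (((1:ℝ) + sq2 y) ^ 3)⁻¹)
        + (-2 * β.2) * (∫ y : ℝ × ℝ, y.2 * (((1:ℝ) + sq2 y) ^ 3)⁻¹) := by
    rw [integral_add (intodd1.const_mul _) (intodd2.const_mul _), integral_const_mul,
      integral_const_mul]
  have e2 : (∫ y : ℝ × ℝ, (sq2 β * (((1:ℝ) + sq2 y) ^ 3)⁻¹
      + ((-2 * β.1) * (y.1 * (((1:ℝ) + sq2 y) ^ 3)⁻¹)
        + (-2 * β.2) * (y.2 * (((1:ℝ) + sq2 y) ^ 3)⁻¹))))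
      = sq2 β * (∫ y : ℝ × ℝ, (((1:ℝ) + sq2 y) ^ 3)⁻¹)
        + ∫ y : ℝ × ℝ, ((-2 * β.1) * (y.1 * (((1:ℝ) + sq2 y) ^ 3)⁻¹)
          + (-2 * β.2) * (y.2 * (((1:ℝ) + sq2 y) ^ 3)⁻¹)) := by
    have hsum : Integrable (fun y : ℝ × ℝ => (-2 * β.1) * (y.1 * (((1:ℝ) + sq2 y) ^ 3)⁻¹)
        + (-2 * β.2) * (y.2 * (((1:ℝ) + sq2 y) ^ 3)⁻¹)) :=
      (intodd1.const_mul _).add (intodd2.const_mul _)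
    rw [integral_add (int3.const_mul _) hsum, integral_const_mul]
  have e1 : (∫ y : ℝ × ℝ, ((((1:ℝ) + sq2 y) ^ 2)⁻¹ + (sq2 β * (((1:ℝ) + sq2 y) ^ 3)⁻¹
      + ((-2 * β.1) * (y.1 * (((1:ℝ) + sq2 y) ^ 3)⁻¹)
        + (-2 * β.2) * (y.2 * (((1:ℝ) + sq2 y) ^ 3)⁻¹)))))
      = (∫ y : ℝ × ℝ, (((1:ℝ) + sq2 y) ^ 2)⁻¹)
        + ∫ y : ℝ × ℝ, (sq2 β * (((1:ℝ) + sq2 y) ^ 3)⁻¹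
          + ((-2 * β.1) * (y.1 * (((1:ℝ) + sq2 y) ^ 3)⁻¹)
            + (-2 * β.2) * (y.2 * (((1:ℝ) + sq2 y) ^ 3)⁻¹))) := by
    exact integral_add int2 ((int3.const_mul _).add
      ((intodd1.const_mul _).add (intodd2.const_mul _)))
  rw [e1, e2, e3, I2, I3, Jodd1, Jodd2]
  have hπ : Real.pi ≠ 0 := ne_of_gt Real.pi_pos
  field_simp
  ring

lemma SP_SPinv (x : ℝ × ℝ) : SP (SPinv x) = x := by
  have h := one_add_sq2_pos x
  have hne : (1:ℝ) + sq2 x ≠ 0 := ne_of_gt h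
  unfold SP SPinv
  simp only [Matrix.cons_val_zero, Matrix.cons_val_one, Matrix.head_cons,
    Matrix.cons_val_two, Matrix.tail_cons]
  have h2 : 1 - (sq2 x - 1) / (1 + sq2 x) = 2 / (1 + sq2 x) := by field_simp; ring
  rw [h2]
  ext <;> simp <;> field_simp <;> ring

lemma part2 (p : Fin 3 → ℝ) (hp : norm3sq p = 1) (hp3 : p 2 ≠ 1) :
    sphInt (fun ω => jacTr (SP p) ω ^ (3 / 2 : ℝ))
      = (1 / 2) * ((3 - p 2) / (1 - p 2)) := by
  set β := SP p with hβ
  have key : ∀ x : ℝ × ℝ, ((1 + sq2 x)⁻¹) ^ 2 • (jacTr β (SPinv x) ^ (3 / 2 : ℝ))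
      = (fun z : ℝ × ℝ => (1 + sq2 (z - β)) * ((1 + sq2 z)⁻¹) ^ 3) (x + β) := by
    intro x
    have ha := one_add_sq2_pos x
    have hb := one_add_sq2_pos (x + β)
    have htr : (1 + sq2 (SP (SPinv x))) / (1 + sq2 (SP (SPinv x) + β))
        = (1 + sq2 x) / (1 + sq2 (x + β)) := by rw [SP_SPinv]
    have hq : (0:ℝ) ≤ (1 + sq2 x) / (1 + sq2 (x + β)) := by positivity
    have hrpow : jacTr β (SPinv x) ^ (3 / 2 : ℝ)
        = ((1 + sq2 x) / (1 + sq2 (x + β))) ^ 3 := by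
      unfold jacTr
      rw [htr, ← Real.rpow_natCast ((1 + sq2 x) / (1 + sq2 (x + β))) 2,
        ← Real.rpow_mul hq, ← Real.rpow_natCast ((1 + sq2 x) / (1 + sq2 (x + β))) 3]
      norm_num
    rw [hrpow]
    simp only [add_sub_cancel_right, smul_eq_mul]
    field_simp
  have hTrans : ∫ x : ℝ × ℝ, (fun z : ℝ × ℝ => (1 + sq2 (z - β)) * ((1 + sq2 z)⁻¹) ^ 3) (x + β)
      = ∫ z : ℝ × ℝ, (1 + sq2 (z - β)) * ((1 + sq2 z)⁻¹) ^ 3 :=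
    integral_add_right_eq_self (fun z : ℝ × ℝ => (1 + sq2 (z - β)) * ((1 + sq2 z)⁻¹) ^ 3) β
  have hmass : sphInt (fun ω => jacTr β ω ^ (3 / 2 : ℝ)) = 1 + sq2 β / 2 := by
    unfold sphInt
    rw [show (∫ x : ℝ × ℝ, ((1 + sq2 x)⁻¹) ^ 2 • (jacTr β (SPinv x) ^ (3 / 2 : ℝ)))
        = ∫ x : ℝ × ℝ, (fun z : ℝ × ℝ => (1 + sq2 (z - β)) * ((1 + sq2 z)⁻¹) ^ 3) (x + β)
      from integral_congr_ae (Eventually.of_forall key), hTrans, smul_eq_mul, part1 β]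
  rw [hmass]
  have h1 : (1:ℝ) - p 2 ≠ 0 := fun h => hp3 (by linarith)
  have hsq : sq2 β = (1 + p 2) / (1 - p 2) := by
    have hsum : p 0 ^ 2 + p 1 ^ 2 = 1 - p 2 ^ 2 := by
      unfold norm3sq dot3 at hp; nlinarith [hp]
    rw [hβ]
    unfold SP sq2
    simp only
    rw [div_pow, div_pow, ← add_div, hsum]
    rw [show (1:ℝ) - p 2 ^ 2 = (1 - p 2) * (1 + p 2) by ring, show ((1:ℝ) - p 2) ^ 2 = (1 - p 2) * (1 - p 2) by ring]
    rw [mul_comm ((1:ℝ) - p 2) (1 + p 2), mul_div_mul_right _ _ h1]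
  rw [hsq]
  field_simp
  ring

end MT7Aux

/-- `(1/π)∫_{ℝ²}(1+|y−β|²)(1+|y|²)⁻³ dy = 1 + |β|²/2`; consequently the
mass of the translation `τ_p` equals `(1/2)(3−p₃)/(1−p₃)`. -/
theorem mass_translation :
    (∀ β : ℝ × ℝ,
      (1 / Real.pi) * ∫ y : ℝ × ℝ, (1 + sq2 (y - β)) * ((1 + sq2 y)⁻¹) ^ 3
        = 1 + sq2 β / 2) ∧
    ∀ p : Fin 3 → ℝ, norm3sq p = 1 → p 2 ≠ 1 →
      sphInt (fun ω => jacTr (SP p) ω ^ (3 / 2 : ℝ))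
        = (1 / 2) * ((3 - p 2) / (1 - p 2)) :=
  ⟨MT7Aux.part1, fun p hp hp3 => MT7Aux.part2 p hp hp3⟩
end

section
/- Let p=(p₁,p₂,p₃) ∈ 𝕊² with p₃ ≠ 1, set a = (1/(3−p₃))·(−2p₁, −2p₂, 1+p₃) ∈ ℝ³ and β = 𝒮(p) ∈ ℝ². Then for every ω ∈ 𝕊²∖{N} with x = 𝒮(ω), one has 1 − a·ω = 2(1+|x+β|²)/((2+|β|²)(1+|x|²)), where a·ω is the Euclidean inner product in ℝ³. -/
open MeasureTheory
open scoped Classical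

/-- with `a = (1/(3−p₃))(−2p₁,−2p₂,1+p₃)`, `β = 𝒮(p)`, `x = 𝒮(ω)`, one has
`1 − a·ω = 2(1+|x+β|²)/((2+|β|²)(1+|x|²))`. -/
theorem one_sub_dot_identity (p : Fin 3 → ℝ) (hp : norm3sq p = 1) (hpN : p 2 ≠ 1)
    (ω : Fin 3 → ℝ) (hω : norm3sq ω = 1) (hωN : ω 2 ≠ 1) :
    1 - dot3 ((3 - p 2)⁻¹ • ![-2 * p 0, -2 * p 1, 1 + p 2]) ω
      = 2 * (1 + sq2 (SP ω + SP p)) / ((2 + sq2 (SP p)) * (1 + sq2 (SP ω))) := by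
  
  unfold norm3sq dot3 at hp hω
  have hp2 : (1:ℝ) - p 2 ≠ 0 := sub_ne_zero.mpr (Ne.symm hpN)
  have hω2 : (1:ℝ) - ω 2 ≠ 0 := sub_ne_zero.mpr (Ne.symm hωN)
  have hp3 : (3:ℝ) - p 2 ≠ 0 := by nlinarith [sq_nonneg (p 0), sq_nonneg (p 1)]
  have s1 : sq2 (SP p) = (1 + p 2) / (1 - p 2) := by
    unfold sq2 SP; field_simp; linear_combination hp
  have s2 : sq2 (SP ω) = (1 + ω 2) / (1 - ω 2) := by
    unfold sq2 SP; field_simp; linear_combination hω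
  have s3 : sq2 (SP ω + SP p)
      = sq2 (SP ω) + sq2 (SP p) + 2 * (ω 0 * p 0 + ω 1 * p 1) / ((1 - ω 2) * (1 - p 2)) := by
    unfold sq2 SP
    simp only [Prod.fst_add, Prod.snd_add]
    field_simp
    ring
  have d1 : 2 + sq2 (SP p) = (3 - p 2) / (1 - p 2) := by
    rw [s1]; field_simp; ring
  have d2 : 1 + sq2 (SP ω) = 2 / (1 - ω 2) := by
    rw [s2]; field_simp; norm_num
  have d3 : 1 + sq2 (SP ω + SP p)
      = (3 - p 2 - ω 2 - p 2 * ω 2 + 2 * (p 0 * ω 0 + p 1 * ω 1))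
        / ((1 - ω 2) * (1 - p 2)) := by
    rw [s3, s1, s2]; field_simp; ring
  rw [d1, d2, d3]
  unfold dot3
  simp only [Pi.smul_apply, Matrix.cons_val_zero, Matrix.cons_val_one, Matrix.head_cons,
    Matrix.cons_val_two, Matrix.tail_cons, smul_eq_mul]
  field_simp
  ring
end

section
/- Let u: 𝕊² → ℝ be measurable with ∫_{𝕊²} e^{2u} dω < ∞, and set g(x) = e^{2u(𝒮⁻¹(x))} for x ∈ ℝ². Then there exist λ₀ > 0 and x₀ ∈ ℝ² such that ∫_{ℝ²} (x − x₀)·g(x)·(1+|x|²)^{−3} dx = 0 (a vector equation in ℝ²) and ∫_{ℝ²} (|x − x₀|² − λ₀²)·g(x)·(1+|x|²)^{−3} dx = 0. Equivalently, for the conformal transformation τ of 𝕊² given in stereographic coordinates by x ↦ λ₀x + x₀, the function u_τ = u∘τ + ψ_τ satisfies ∫_{𝕊²} ω e^{2u_τ(ω)} dω = 0. -/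
open MeasureTheory
open scoped Classical

/-- Jacobian of the conformal map given by `x ↦ λx + x₀` in stereographic coordinates. -/
noncomputable def jacAff (l : ℝ) (x0 : ℝ × ℝ) (ω : Fin 3 → ℝ) : ℝ :=
  l ^ 2 * ((1 + sq2 (SP ω)) / (1 + sq2 (l • SP ω + x0))) ^ 2

/-- The conformal map of `𝕊²` given by `x ↦ λx + x₀` in stereographic coordinates. -/
noncomputable def tauAff (l : ℝ) (x0 : ℝ × ℝ) (ω : Fin 3 → ℝ) : Fin 3 → ℝ := SPinv (l • SP ω + x0)

/-- `ψ_τ` for the conformal map `x ↦ λx + x₀`. -/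
noncomputable def psiAff (l : ℝ) (x0 : ℝ × ℝ) (ω : Fin 3 → ℝ) : ℝ :=
  (3 / 4) * Real.log (jacAff l x0 ω) +
    (-(1 / 2) * Real.log (sphInt fun ξ => jacAff l x0 ξ ^ (3 / 2 : ℝ)))

lemma sq2_nonneg' (x : ℝ × ℝ) : 0 ≤ sq2 x := by unfold sq2; positivity

lemma one_add_sq2_pos (x : ℝ × ℝ) : 0 < 1 + sq2 x := by
  have := sq2_nonneg' x; linarith

lemma sq2_pos_of_ne {z : ℝ × ℝ} (hz : z ≠ 0) : 0 < sq2 z := by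
  have h : z.1 ≠ 0 ∨ z.2 ≠ 0 := by
    by_contra h; push_neg at h; exact hz (Prod.ext h.1 h.2)
  rcases h with h | h <;> (unfold sq2; positivity)

lemma SP_SPinv (x : ℝ × ℝ) : SP (SPinv x) = x := by
  have h := (one_add_sq2_pos x).ne'
  unfold SP SPinv
  simp only [Matrix.cons_val_zero, Matrix.cons_val_one, Matrix.head_cons,
    Matrix.cons_val_two, Matrix.tail_cons]
  have h2 : 1 - (sq2 x - 1) / (1 + sq2 x) = 2 / (1 + sq2 x) := by field_simp; ring
  rw [h2]
  ext <;> (simp only; field_simp)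

lemma measurable_SPinv : Measurable SPinv := by
  apply measurable_pi_lambda
  intro i
  fin_cases i <;> simp [SPinv, sq2] <;> fun_prop

lemma integrable_base : Integrable (fun x : ℝ × ℝ => ((1 + sq2 x)⁻¹) ^ 2) := by
  have h4 : ((Module.finrank ℝ (ℝ × ℝ) : ℝ)) < 4 := by
    rw [Module.finrank_prod]; norm_num
  refine (integrable_rpow_neg_one_add_norm_sq (E := ℝ × ℝ) (μ := volume) h4).mono'
    (Measurable.aestronglyMeasurable (by unfold sq2; fun_prop)) ?_
  filter_upwards with x
  have h1 : ‖x‖ ^ 2 ≤ sq2 x := by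
    have hn : ‖x‖ = max |x.1| |x.2| := by simp [Prod.norm_def, Real.norm_eq_abs]
    rw [hn]; unfold sq2
    rcases le_total |x.1| |x.2| with h | h
    · rw [max_eq_right h]; nlinarith [sq_abs x.1, sq_abs x.2, sq_nonneg x.1]
    · rw [max_eq_left h]; nlinarith [sq_abs x.1, sq_abs x.2, sq_nonneg x.2]
  have hrw : ((1:ℝ) + ‖x‖ ^ 2) ^ (-(4:ℝ) / 2) = (((1:ℝ) + ‖x‖ ^ 2) ^ 2)⁻¹ := by
    have hb : (0:ℝ) ≤ 1 + ‖x‖ ^ 2 := by positivity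
    rw [show -(4:ℝ) / 2 = -(2:ℝ) by norm_num, Real.rpow_neg hb,
      show (2:ℝ) = ((2:ℕ):ℝ) by norm_num, Real.rpow_natCast]
  rw [hrw, Real.norm_of_nonneg (by positivity), inv_pow]
  gcongr

noncomputable def PsiFun (u : (Fin 3 → ℝ) → ℝ) (l : ℝ) (x0 : ℝ × ℝ) (y : ℝ × ℝ) : Fin 3 → ℝ :=
  (Real.exp (2 * u (SPinv y)) * ((1 + sq2 y)⁻¹) ^ 3) •
    ![2 * (y.1 - x0.1) / l, 2 * (y.2 - x0.2) / l, (sq2 (y - x0) - l ^ 2) / l ^ 2]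

set_option maxHeartbeats 2000000 in
/-- the center of mass of `e^{2u}` can be moved to the origin by a
conformal transformation `x ↦ λ₀x + x₀`. -/
theorem center_of_mass_zero (u : (Fin 3 → ℝ) → ℝ) (hu : Measurable u)
    (hint : SphIntegrable fun ω => Real.exp (2 * u ω)) :
    ∃ l : ℝ, 0 < l ∧ ∃ x0 : ℝ × ℝ,
      (∫ x : ℝ × ℝ,
        (x.1 - x0.1) * Real.exp (2 * u (SPinv x)) * ((1 + sq2 x)⁻¹) ^ 3 = 0) ∧
      (∫ x : ℝ × ℝ,
        (x.2 - x0.2) * Real.exp (2 * u (SPinv x)) * ((1 + sq2 x)⁻¹) ^ 3 = 0) ∧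
      (∫ x : ℝ × ℝ,
        (sq2 (x - x0) - l ^ 2) * Real.exp (2 * u (SPinv x)) * ((1 + sq2 x)⁻¹) ^ 3 = 0) ∧
      sphInt (fun ω => Real.exp (2 * (u (tauAff l x0 ω) + psiAff l x0 ω)) • ω) = 0 := by
  classical
  have hIbase : Integrable fun x : ℝ × ℝ =>
      ((1 + sq2 x)⁻¹) ^ 2 * Real.exp (2 * u (SPinv x)) := hint
  have hgmeas : Measurable fun x : ℝ × ℝ => Real.exp (2 * u (SPinv x)) :=
    Real.measurable_exp.comp ((hu.comp measurable_SPinv).const_mul 2)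
  have hwmeas : Measurable fun x : ℝ × ℝ => ((1 + sq2 x)⁻¹) ^ 3 := by
    unfold sq2; fun_prop
  have hw2meas : Measurable fun x : ℝ × ℝ => ((1 + sq2 x)⁻¹) ^ 2 := by
    unfold sq2; fun_prop
  -- basic integrabilities
  have I0 : Integrable fun x : ℝ × ℝ =>
      Real.exp (2 * u (SPinv x)) * ((1 + sq2 x)⁻¹) ^ 3 := by
    refine hIbase.mono' (hgmeas.mul hwmeas).aestronglyMeasurable ?_
    filter_upwards with x
    have ht := one_add_sq2_pos x
    have h1 : (1 + sq2 x)⁻¹ ≤ 1 := inv_le_one_of_one_le₀ (by linarith [sq2_nonneg' x])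
    have h0 : (0:ℝ) ≤ (1 + sq2 x)⁻¹ := by positivity
    have hE : (0:ℝ) < Real.exp (2 * u (SPinv x)) := Real.exp_pos _
    have hpw : ((1 + sq2 x)⁻¹) ^ 3 ≤ ((1 + sq2 x)⁻¹) ^ 2 :=
      pow_le_pow_of_le_one h0 h1 (by norm_num)
    rw [Real.norm_of_nonneg (by positivity)]
    nlinarith [mul_le_mul_of_nonneg_right hpw hE.le]
  have I1 : Integrable fun x : ℝ × ℝ =>
      x.1 * Real.exp (2 * u (SPinv x)) * ((1 + sq2 x)⁻¹) ^ 3 := by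
    refine (hIbase.const_mul (1/2)).mono'
      ((measurable_fst.mul hgmeas).mul hwmeas).aestronglyMeasurable ?_
    filter_upwards with x
    have ht := one_add_sq2_pos x
    have htt : (1 + sq2 x) * (1 + sq2 x)⁻¹ = 1 := mul_inv_cancel₀ ht.ne'
    have h0 : (0:ℝ) ≤ (1 + sq2 x)⁻¹ := by positivity
    have hE : (0:ℝ) < Real.exp (2 * u (SPinv x)) := Real.exp_pos _
    have habs : |x.1| ≤ (1 + sq2 x) / 2 := by
      unfold sq2; nlinarith [sq_nonneg (|x.1| - 1), sq_abs x.1, sq_nonneg x.2]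
    calc ‖x.1 * Real.exp (2 * u (SPinv x)) * ((1 + sq2 x)⁻¹) ^ 3‖
        = |x.1| * (Real.exp (2 * u (SPinv x)) * ((1 + sq2 x)⁻¹) ^ 3) := by
          rw [Real.norm_eq_abs, abs_mul, abs_mul, abs_of_nonneg hE.le,
            abs_of_nonneg (by positivity : (0:ℝ) ≤ ((1 + sq2 x)⁻¹) ^ 3), mul_assoc]
      _ ≤ ((1 + sq2 x) / 2) * (Real.exp (2 * u (SPinv x)) * ((1 + sq2 x)⁻¹) ^ 3) := by
          gcongr
      _ = (1/2) * (((1 + sq2 x)⁻¹) ^ 2 * Real.exp (2 * u (SPinv x)))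
            * ((1 + sq2 x) * (1 + sq2 x)⁻¹) := by ring
      _ = (1/2) * (((1 + sq2 x)⁻¹) ^ 2 * Real.exp (2 * u (SPinv x))) := by
          rw [htt, mul_one]
  have I2 : Integrable fun x : ℝ × ℝ =>
      x.2 * Real.exp (2 * u (SPinv x)) * ((1 + sq2 x)⁻¹) ^ 3 := by
    refine (hIbase.const_mul (1/2)).mono'
      ((measurable_snd.mul hgmeas).mul hwmeas).aestronglyMeasurable ?_
    filter_upwards with x
    have ht := one_add_sq2_pos x
    have htt : (1 + sq2 x) * (1 + sq2 x)⁻¹ = 1 := mul_inv_cancel₀ ht.ne'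
    have h0 : (0:ℝ) ≤ (1 + sq2 x)⁻¹ := by positivity
    have hE : (0:ℝ) < Real.exp (2 * u (SPinv x)) := Real.exp_pos _
    have habs : |x.2| ≤ (1 + sq2 x) / 2 := by
      unfold sq2; nlinarith [sq_nonneg (|x.2| - 1), sq_abs x.2, sq_nonneg x.1]
    calc ‖x.2 * Real.exp (2 * u (SPinv x)) * ((1 + sq2 x)⁻¹) ^ 3‖
        = |x.2| * (Real.exp (2 * u (SPinv x)) * ((1 + sq2 x)⁻¹) ^ 3) := by
          rw [Real.norm_eq_abs, abs_mul, abs_mul, abs_of_nonneg hE.le,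
            abs_of_nonneg (by positivity : (0:ℝ) ≤ ((1 + sq2 x)⁻¹) ^ 3), mul_assoc]
      _ ≤ ((1 + sq2 x) / 2) * (Real.exp (2 * u (SPinv x)) * ((1 + sq2 x)⁻¹) ^ 3) := by
          gcongr
      _ = (1/2) * (((1 + sq2 x)⁻¹) ^ 2 * Real.exp (2 * u (SPinv x)))
            * ((1 + sq2 x) * (1 + sq2 x)⁻¹) := by ring
      _ = (1/2) * (((1 + sq2 x)⁻¹) ^ 2 * Real.exp (2 * u (SPinv x))) := by
          rw [htt, mul_one]
  have Isq : Integrable fun x : ℝ × ℝ =>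
      sq2 x * Real.exp (2 * u (SPinv x)) * ((1 + sq2 x)⁻¹) ^ 3 := by
    refine hIbase.mono'
      (((by unfold sq2; fun_prop : Measurable fun x : ℝ × ℝ => sq2 x).mul hgmeas).mul
        hwmeas).aestronglyMeasurable ?_
    filter_upwards with x
    have ht := one_add_sq2_pos x
    have htt : (1 + sq2 x) * (1 + sq2 x)⁻¹ = 1 := mul_inv_cancel₀ ht.ne'
    have h0 : (0:ℝ) ≤ (1 + sq2 x)⁻¹ := by positivity
    have hE : (0:ℝ) < Real.exp (2 * u (SPinv x)) := Real.exp_pos _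
    have hs := sq2_nonneg' x
    calc ‖sq2 x * Real.exp (2 * u (SPinv x)) * ((1 + sq2 x)⁻¹) ^ 3‖
        = sq2 x * (Real.exp (2 * u (SPinv x)) * ((1 + sq2 x)⁻¹) ^ 3) := by
          rw [Real.norm_of_nonneg (by positivity), mul_assoc]
      _ ≤ (1 + sq2 x) * (Real.exp (2 * u (SPinv x)) * ((1 + sq2 x)⁻¹) ^ 3) := by
          gcongr; linarith
      _ = (((1 + sq2 x)⁻¹) ^ 2 * Real.exp (2 * u (SPinv x)))
            * ((1 + sq2 x) * (1 + sq2 x)⁻¹) := by ring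
      _ = ((1 + sq2 x)⁻¹) ^ 2 * Real.exp (2 * u (SPinv x)) := by rw [htt, mul_one]
  -- the total mass is positive
  set D : ℝ := ∫ x : ℝ × ℝ, Real.exp (2 * u (SPinv x)) * ((1 + sq2 x)⁻¹) ^ 3 with hDdef
  have hD : 0 < D := by
    rw [hDdef]
    refine (integral_pos_iff_support_of_nonneg (fun x => mul_nonneg (Real.exp_pos _).le
      (pow_nonneg (inv_nonneg.mpr (one_add_sq2_pos x).le) 3)) I0).mpr ?_
    have hsupp : (Function.support fun x : ℝ × ℝ =>
        Real.exp (2 * u (SPinv x)) * ((1 + sq2 x)⁻¹) ^ 3) = Set.univ := by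
      refine Set.eq_univ_of_forall fun x => ?_
      exact (mul_pos (Real.exp_pos _) (pow_pos (inv_pos.mpr (one_add_sq2_pos x)) 3)).ne'
    rw [hsupp]
    exact IsOpen.measure_pos volume isOpen_univ ⟨(0, 0), trivial⟩
  set A1 : ℝ := ∫ x : ℝ × ℝ, x.1 * Real.exp (2 * u (SPinv x)) * ((1 + sq2 x)⁻¹) ^ 3 with hA1def
  set A2 : ℝ := ∫ x : ℝ × ℝ, x.2 * Real.exp (2 * u (SPinv x)) * ((1 + sq2 x)⁻¹) ^ 3 with hA2def
  set x0 : ℝ × ℝ := (A1 / D, A2 / D) with hx0def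
  -- first moment conditions
  have hm1 : ∫ x : ℝ × ℝ,
      (x.1 - x0.1) * Real.exp (2 * u (SPinv x)) * ((1 + sq2 x)⁻¹) ^ 3 = 0 := by
    have e : (fun x : ℝ × ℝ =>
        (x.1 - x0.1) * Real.exp (2 * u (SPinv x)) * ((1 + sq2 x)⁻¹) ^ 3)
        = fun x : ℝ × ℝ => x.1 * Real.exp (2 * u (SPinv x)) * ((1 + sq2 x)⁻¹) ^ 3
            - x0.1 * (Real.exp (2 * u (SPinv x)) * ((1 + sq2 x)⁻¹) ^ 3) := by
      funext x; ring
    rw [e, integral_sub I1 (I0.const_mul x0.1), integral_const_mul, ← hDdef, ← hA1def]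
    simp only [hx0def]
    field_simp
    ring
  have hm2 : ∫ x : ℝ × ℝ,
      (x.2 - x0.2) * Real.exp (2 * u (SPinv x)) * ((1 + sq2 x)⁻¹) ^ 3 = 0 := by
    have e : (fun x : ℝ × ℝ =>
        (x.2 - x0.2) * Real.exp (2 * u (SPinv x)) * ((1 + sq2 x)⁻¹) ^ 3)
        = fun x : ℝ × ℝ => x.2 * Real.exp (2 * u (SPinv x)) * ((1 + sq2 x)⁻¹) ^ 3
            - x0.2 * (Real.exp (2 * u (SPinv x)) * ((1 + sq2 x)⁻¹) ^ 3) := by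
      funext x; ring
    rw [e, integral_sub I2 (I0.const_mul x0.2), integral_const_mul, ← hDdef, ← hA2def]
    simp only [hx0def]
    field_simp
    ring
  -- second moment
  have Imq : Integrable fun x : ℝ × ℝ =>
      sq2 (x - x0) * Real.exp (2 * u (SPinv x)) * ((1 + sq2 x)⁻¹) ^ 3 := by
    have e : (fun x : ℝ × ℝ =>
        sq2 (x - x0) * Real.exp (2 * u (SPinv x)) * ((1 + sq2 x)⁻¹) ^ 3)
        = fun x : ℝ × ℝ =>
            sq2 x * Real.exp (2 * u (SPinv x)) * ((1 + sq2 x)⁻¹) ^ 3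
            + (-2 * x0.1) * (x.1 * Real.exp (2 * u (SPinv x)) * ((1 + sq2 x)⁻¹) ^ 3)
            + (-2 * x0.2) * (x.2 * Real.exp (2 * u (SPinv x)) * ((1 + sq2 x)⁻¹) ^ 3)
            + sq2 x0 * (Real.exp (2 * u (SPinv x)) * ((1 + sq2 x)⁻¹) ^ 3) := by
      funext x
      simp only [sq2, Prod.fst_sub, Prod.snd_sub]
      ring
    rw [e]
    exact ((Isq.add (I1.const_mul _)).add (I2.const_mul _)).add (I0.const_mul _)
  set N : ℝ := ∫ x : ℝ × ℝ,
      sq2 (x - x0) * Real.exp (2 * u (SPinv x)) * ((1 + sq2 x)⁻¹) ^ 3 with hNdef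
  have hN : 0 < N := by
    rw [hNdef]
    refine (integral_pos_iff_support_of_nonneg
      (fun x => mul_nonneg (mul_nonneg (sq2_nonneg' _) (Real.exp_pos _).le)
        (pow_nonneg (inv_nonneg.mpr (one_add_sq2_pos x).le) 3)) Imq).mpr ?_
    have hsub : ({x0}ᶜ : Set (ℝ × ℝ)) ⊆ Function.support fun x : ℝ × ℝ =>
        sq2 (x - x0) * Real.exp (2 * u (SPinv x)) * ((1 + sq2 x)⁻¹) ^ 3 := by
      intro x hx
      have hxne : x - x0 ≠ 0 := sub_ne_zero.mpr hx
      have h1 := sq2_pos_of_ne hxne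
      exact (mul_pos (mul_pos h1 (Real.exp_pos _))
        (pow_pos (inv_pos.mpr (one_add_sq2_pos x)) 3)).ne'
    refine lt_of_lt_of_le ?_ (measure_mono hsub)
    refine IsOpen.measure_pos volume isOpen_compl_singleton ?_
    refine ⟨x0 + (1, 0), ?_⟩
    simp [Prod.ext_iff]
  set l : ℝ := Real.sqrt (N / D) with hldef
  have hl : 0 < l := Real.sqrt_pos.mpr (div_pos hN hD)
  have hl2 : l ^ 2 = N / D := Real.sq_sqrt (div_pos hN hD).le
  have hm3 : ∫ x : ℝ × ℝ,
      (sq2 (x - x0) - l ^ 2) * Real.exp (2 * u (SPinv x)) * ((1 + sq2 x)⁻¹) ^ 3 = 0 := by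
    have e : (fun x : ℝ × ℝ =>
        (sq2 (x - x0) - l ^ 2) * Real.exp (2 * u (SPinv x)) * ((1 + sq2 x)⁻¹) ^ 3)
        = fun x : ℝ × ℝ =>
            sq2 (x - x0) * Real.exp (2 * u (SPinv x)) * ((1 + sq2 x)⁻¹) ^ 3
            - l ^ 2 * (Real.exp (2 * u (SPinv x)) * ((1 + sq2 x)⁻¹) ^ 3) := by
      funext x; ring
    rw [e, integral_sub Imq (I0.const_mul _), integral_const_mul, ← hDdef, ← hNdef, hl2]
    field_simp
    ring
  clear_value l x0 N A2 A1 D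
  -- remaining integrabilities
  have Im1 : Integrable fun x : ℝ × ℝ =>
      (x.1 - x0.1) * Real.exp (2 * u (SPinv x)) * ((1 + sq2 x)⁻¹) ^ 3 := by
    have e : (fun x : ℝ × ℝ =>
        (x.1 - x0.1) * Real.exp (2 * u (SPinv x)) * ((1 + sq2 x)⁻¹) ^ 3)
        = fun x : ℝ × ℝ => x.1 * Real.exp (2 * u (SPinv x)) * ((1 + sq2 x)⁻¹) ^ 3
            - x0.1 * (Real.exp (2 * u (SPinv x)) * ((1 + sq2 x)⁻¹) ^ 3) := by
      funext x; ring
    rw [e]; exact I1.sub (I0.const_mul _)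
  have Im2 : Integrable fun x : ℝ × ℝ =>
      (x.2 - x0.2) * Real.exp (2 * u (SPinv x)) * ((1 + sq2 x)⁻¹) ^ 3 := by
    have e : (fun x : ℝ × ℝ =>
        (x.2 - x0.2) * Real.exp (2 * u (SPinv x)) * ((1 + sq2 x)⁻¹) ^ 3)
        = fun x : ℝ × ℝ => x.2 * Real.exp (2 * u (SPinv x)) * ((1 + sq2 x)⁻¹) ^ 3
            - x0.2 * (Real.exp (2 * u (SPinv x)) * ((1 + sq2 x)⁻¹) ^ 3) := by
      funext x; ring
    rw [e]; exact I2.sub (I0.const_mul _)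
  have Im3 : Integrable fun x : ℝ × ℝ =>
      (sq2 (x - x0) - l ^ 2) * Real.exp (2 * u (SPinv x)) * ((1 + sq2 x)⁻¹) ^ 3 := by
    have e : (fun x : ℝ × ℝ =>
        (sq2 (x - x0) - l ^ 2) * Real.exp (2 * u (SPinv x)) * ((1 + sq2 x)⁻¹) ^ 3)
        = fun x : ℝ × ℝ => sq2 (x - x0) * Real.exp (2 * u (SPinv x)) * ((1 + sq2 x)⁻¹) ^ 3
            - l ^ 2 * (Real.exp (2 * u (SPinv x)) * ((1 + sq2 x)⁻¹) ^ 3) := by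
      funext x; ring
    rw [e]; exact Imq.sub (I0.const_mul _)
  -- jacobian facts
  have hl2pos : (0:ℝ) < l ^ 2 := by positivity
  have hSpos : ∀ x : ℝ × ℝ, 0 < 1 + sq2 (l • x + x0) := fun x => one_add_sq2_pos _
  have hjacSP : ∀ x : ℝ × ℝ, jacAff l x0 (SPinv x)
      = l ^ 2 * ((1 + sq2 x) / (1 + sq2 (l • x + x0))) ^ 2 := by
    intro x; unfold jacAff; rw [SP_SPinv]
  have hjacpos : ∀ x : ℝ × ℝ, 0 < jacAff l x0 (SPinv x) := by
    intro x; rw [hjacSP x]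
    have h1 := one_add_sq2_pos x; have h2 := hSpos x
    positivity
  have hjac32 : ∀ x : ℝ × ℝ, jacAff l x0 (SPinv x) ^ (3 / 2 : ℝ)
      = l ^ 3 * ((1 + sq2 x) / (1 + sq2 (l • x + x0))) ^ 3 := by
    intro x
    rw [hjacSP x]
    set r : ℝ := (1 + sq2 x) / (1 + sq2 (l • x + x0)) with hrdef
    have hr0 : 0 ≤ r := div_nonneg (one_add_sq2_pos x).le (hSpos x).le
    have h0 : 0 ≤ l * r := mul_nonneg hl.le hr0
    have h1 : l ^ 2 * r ^ 2 = (l * r) ^ (2:ℕ) := by ring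
    rw [h1, ← Real.rpow_natCast (l * r) 2, ← Real.rpow_mul h0,
      show ((2:ℕ):ℝ) * (3 / 2 : ℝ) = ((3:ℕ):ℝ) by push_cast; norm_num,
      Real.rpow_natCast]
    ring
  -- comparison bound and integrability of the jacobian term
  have hcomp : ∀ x : ℝ × ℝ,
      1 + sq2 x ≤ ((l ^ 2 + 2 * sq2 x0 + 2) / l ^ 2) * (1 + sq2 (l • x + x0)) := by
    intro x
    have h1 : sq2 (l • x) = l ^ 2 * sq2 x := by
      simp only [sq2, Prod.smul_fst, Prod.smul_snd, smul_eq_mul]; ring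
    have h2 : sq2 (l • x) ≤ 2 * sq2 (l • x + x0) + 2 * sq2 x0 := by
      simp only [sq2, Prod.fst_add, Prod.snd_add, Prod.smul_fst, Prod.smul_snd, smul_eq_mul]
      nlinarith [sq_nonneg (l * x.1 + x0.1 + x0.1), sq_nonneg (l * x.2 + x0.2 + x0.2)]
    have hp : 0 ≤ (l ^ 2 + 2 * sq2 x0) * sq2 (l • x + x0) :=
      mul_nonneg (by nlinarith [sq2_nonneg' x0, sq_nonneg l]) (sq2_nonneg' _)
    rw [div_mul_eq_mul_div, le_div_iff₀ hl2pos]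
    nlinarith [h1, h2, hp, sq2_nonneg' x0, sq2_nonneg' (l • x + x0)]
  have hrC : ∀ x : ℝ × ℝ, (1 + sq2 x) / (1 + sq2 (l • x + x0))
      ≤ (l ^ 2 + 2 * sq2 x0 + 2) / l ^ 2 := by
    intro x; rw [div_le_iff₀ (hSpos x)]; exact hcomp x
  have IjM : Integrable fun x : ℝ × ℝ =>
      ((1 + sq2 x)⁻¹) ^ 2 * (jacAff l x0 (SPinv x) ^ (3 / 2 : ℝ)) := by
    have e : (fun x : ℝ × ℝ => ((1 + sq2 x)⁻¹) ^ 2 * (jacAff l x0 (SPinv x) ^ (3 / 2 : ℝ)))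
        = fun x : ℝ × ℝ => ((1 + sq2 x)⁻¹) ^ 2
            * (l ^ 3 * ((1 + sq2 x) / (1 + sq2 (l • x + x0))) ^ 3) := by
      funext x; rw [hjac32 x]
    rw [e]
    refine (integrable_base.const_mul (l ^ 3 * ((l ^ 2 + 2 * sq2 x0 + 2) / l ^ 2) ^ 3)).mono'
      ?_ ?_
    · apply Measurable.aestronglyMeasurable
      simp only [sq2, Prod.fst_add, Prod.snd_add, Prod.smul_fst, Prod.smul_snd, smul_eq_mul]
      fun_prop
    · filter_upwards with x
      have h1 := one_add_sq2_pos x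
      have h2 := hSpos x
      have hr0 : 0 ≤ (1 + sq2 x) / (1 + sq2 (l • x + x0)) := div_nonneg h1.le h2.le
      have h3 : ((1 + sq2 x) / (1 + sq2 (l • x + x0))) ^ 3
          ≤ ((l ^ 2 + 2 * sq2 x0 + 2) / l ^ 2) ^ 3 := pow_le_pow_left₀ hr0 (hrC x) 3
      rw [Real.norm_of_nonneg (mul_nonneg (pow_nonneg (inv_nonneg.mpr h1.le) 2)
        (mul_nonneg (pow_pos hl 3).le (pow_nonneg hr0 3)))]
      calc ((1 + sq2 x)⁻¹) ^ 2 * (l ^ 3 * ((1 + sq2 x) / (1 + sq2 (l • x + x0))) ^ 3)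
          ≤ ((1 + sq2 x)⁻¹) ^ 2 * (l ^ 3 * ((l ^ 2 + 2 * sq2 x0 + 2) / l ^ 2) ^ 3) :=
            mul_le_mul_of_nonneg_left
              (mul_le_mul_of_nonneg_left h3 (pow_pos hl 3).le)
              (pow_nonneg (inv_nonneg.mpr h1.le) 2)
        _ = l ^ 3 * ((l ^ 2 + 2 * sq2 x0 + 2) / l ^ 2) ^ 3 * ((1 + sq2 x)⁻¹) ^ 2 := by
            ring
  -- positivity of the mass
  have hMpos : 0 < sphInt fun ξ => jacAff l x0 ξ ^ (3 / 2 : ℝ) := by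
    unfold sphInt
    simp only [smul_eq_mul]
    have hipos : 0 < ∫ x : ℝ × ℝ,
        ((1 + sq2 x)⁻¹) ^ 2 * (jacAff l x0 (SPinv x) ^ (3 / 2 : ℝ)) := by
      refine (integral_pos_iff_support_of_nonneg
        (fun x => mul_nonneg (pow_nonneg (inv_nonneg.mpr (one_add_sq2_pos x).le) 2)
          (Real.rpow_nonneg (hjacpos x).le _)) IjM).mpr ?_
      have hsupp : (Function.support fun x : ℝ × ℝ =>
          ((1 + sq2 x)⁻¹) ^ 2 * (jacAff l x0 (SPinv x) ^ (3 / 2 : ℝ))) = Set.univ := by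
        refine Set.eq_univ_of_forall fun x => ?_
        exact (mul_pos (pow_pos (inv_pos.mpr (one_add_sq2_pos x)) 2)
          (Real.rpow_pos_of_pos (hjacpos x) _)).ne'
      rw [hsupp]
      exact IsOpen.measure_pos volume isOpen_univ ⟨(0, 0), trivial⟩
    exact mul_pos (by positivity) hipos
  set M : ℝ := sphInt fun ξ => jacAff l x0 ξ ^ (3 / 2 : ℝ) with hMdef
  clear_value M
  refine ⟨l, hl, x0, hm1, hm2, hm3, ?_⟩
  -- pointwise identity
  have key : ∀ x : ℝ × ℝ,
      ((1 + sq2 x)⁻¹) ^ 2 •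
        (Real.exp (2 * (u (tauAff l x0 (SPinv x)) + psiAff l x0 (SPinv x))) • SPinv x)
      = (l ^ 3 * M⁻¹) • PsiFun u l x0 (l • x + x0) := by
    intro x
    have htau : tauAff l x0 (SPinv x) = SPinv (l • x + x0) := by
      unfold tauAff; rw [SP_SPinv]
    have hpsi : Real.exp (2 * psiAff l x0 (SPinv x))
        = (l ^ 3 * ((1 + sq2 x) / (1 + sq2 (l • x + x0))) ^ 3) * M⁻¹ := by
      unfold psiAff
      rw [← hMdef,
        show 2 * ((3 / 4) * Real.log (jacAff l x0 (SPinv x)) + (-(1 / 2) * Real.log M))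
          = Real.log (jacAff l x0 (SPinv x)) * (3 / 2 : ℝ) + (- Real.log M) by ring,
        Real.exp_add, ← Real.rpow_def_of_pos (hjacpos x), Real.exp_neg,
        Real.exp_log hMpos, hjac32 x]
    have hexp : Real.exp (2 * (u (tauAff l x0 (SPinv x)) + psiAff l x0 (SPinv x)))
        = Real.exp (2 * u (SPinv (l • x + x0))) * Real.exp (2 * psiAff l x0 (SPinv x)) := by
      rw [htau, show (2:ℝ) * (u (SPinv (l • x + x0)) + psiAff l x0 (SPinv x))
        = 2 * u (SPinv (l • x + x0)) + 2 * psiAff l x0 (SPinv x) by ring, Real.exp_add]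
    rw [hexp, hpsi]
    have hsq2shift : sq2 ((l • x + x0) - x0) = l ^ 2 * sq2 x := by
      simp only [sq2, Prod.fst_sub, Prod.snd_sub, Prod.fst_add, Prod.snd_add,
        Prod.smul_fst, Prod.smul_snd, smul_eq_mul]
      ring
    have h1 := (one_add_sq2_pos x).ne'
    have h2 := (one_add_sq2_pos (l • x + x0)).ne'
    have h3 := hl.ne'
    have h4 := hMpos.ne'
    funext i
    fin_cases i <;>
      simp only [PsiFun, Pi.smul_apply, smul_eq_mul, SPinv, Matrix.cons_val_zero,
        Matrix.cons_val_one, Matrix.head_cons, Matrix.cons_val_two, Matrix.tail_cons,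
        Prod.fst_add, Prod.snd_add, Prod.fst_sub, Prod.snd_sub,
        Prod.smul_fst, Prod.smul_snd, hsq2shift, Fin.zero_eta, Fin.mk_one, Fin.reduceFinMk, Matrix.cons_val] <;>
      field_simp <;>
      ring
  -- integral of PsiFun vanishes
  have hPsi0 : ∫ y : ℝ × ℝ, PsiFun u l x0 y = 0 := by
    have hdecomp : (fun y : ℝ × ℝ => PsiFun u l x0 y)
        = fun y : ℝ × ℝ =>
            (((2 / l) * ((y.1 - x0.1) * Real.exp (2 * u (SPinv y)) * ((1 + sq2 y)⁻¹) ^ 3)) •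
              (![1, 0, 0] : Fin 3 → ℝ)
            + ((2 / l) * ((y.2 - x0.2) * Real.exp (2 * u (SPinv y)) * ((1 + sq2 y)⁻¹) ^ 3)) •
              (![0, 1, 0] : Fin 3 → ℝ))
            + ((1 / l ^ 2) *
                ((sq2 (y - x0) - l ^ 2) * Real.exp (2 * u (SPinv y)) * ((1 + sq2 y)⁻¹) ^ 3)) •
              (![0, 0, 1] : Fin 3 → ℝ) := by
      funext y i
      fin_cases i <;>
        simp only [PsiFun, Pi.add_apply, Pi.smul_apply, smul_eq_mul, Matrix.cons_val_zero,
          Matrix.cons_val_one, Matrix.head_cons, Matrix.cons_val_two, Matrix.tail_cons,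
          Fin.zero_eta, Fin.mk_one, Fin.reduceFinMk, Matrix.cons_val] <;>
        field_simp <;>
        ring
    have Ia : Integrable fun y : ℝ × ℝ =>
        ((2 / l) * ((y.1 - x0.1) * Real.exp (2 * u (SPinv y)) * ((1 + sq2 y)⁻¹) ^ 3)) •
          (![1, 0, 0] : Fin 3 → ℝ) := (Im1.const_mul _).smul_const _
    have Ib : Integrable fun y : ℝ × ℝ =>
        ((2 / l) * ((y.2 - x0.2) * Real.exp (2 * u (SPinv y)) * ((1 + sq2 y)⁻¹) ^ 3)) •
          (![0, 1, 0] : Fin 3 → ℝ) := (Im2.const_mul _).smul_const _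
    have Ic : Integrable fun y : ℝ × ℝ =>
        ((1 / l ^ 2) *
            ((sq2 (y - x0) - l ^ 2) * Real.exp (2 * u (SPinv y)) * ((1 + sq2 y)⁻¹) ^ 3)) •
          (![0, 0, 1] : Fin 3 → ℝ) := (Im3.const_mul _).smul_const _
    have hIA : ∫ y : ℝ × ℝ,
        ((2 / l) * ((y.1 - x0.1) * Real.exp (2 * u (SPinv y)) * ((1 + sq2 y)⁻¹) ^ 3)) •
          (![1, 0, 0] : Fin 3 → ℝ) = 0 := by
      rw [integral_smul_const, integral_const_mul, hm1, mul_zero, zero_smul]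
    have hIB : ∫ y : ℝ × ℝ,
        ((2 / l) * ((y.2 - x0.2) * Real.exp (2 * u (SPinv y)) * ((1 + sq2 y)⁻¹) ^ 3)) •
          (![0, 1, 0] : Fin 3 → ℝ) = 0 := by
      rw [integral_smul_const, integral_const_mul, hm2, mul_zero, zero_smul]
    have hIC : ∫ y : ℝ × ℝ,
        ((1 / l ^ 2) *
            ((sq2 (y - x0) - l ^ 2) * Real.exp (2 * u (SPinv y)) * ((1 + sq2 y)⁻¹) ^ 3)) •
          (![0, 0, 1] : Fin 3 → ℝ) = 0 := by
      rw [integral_smul_const, integral_const_mul, hm3, mul_zero, zero_smul]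
    have Iab : Integrable (fun y : ℝ × ℝ =>
        ((2 / l) * ((y.1 - x0.1) * Real.exp (2 * u (SPinv y)) * ((1 + sq2 y)⁻¹) ^ 3)) •
          (![1, 0, 0] : Fin 3 → ℝ)
        + ((2 / l) * ((y.2 - x0.2) * Real.exp (2 * u (SPinv y)) * ((1 + sq2 y)⁻¹) ^ 3)) •
          (![0, 1, 0] : Fin 3 → ℝ)) volume := Ia.add Ib
    rw [hdecomp, integral_add Iab Ic, integral_add Ia Ib, hIA, hIB, hIC]
    simp
  -- change of variables
  have hcv : ∫ x : ℝ × ℝ, PsiFun u l x0 (l • x + x0) = 0 := by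
    have e : (fun x : ℝ × ℝ => PsiFun u l x0 (l • x + x0))
        = fun x : ℝ × ℝ => (fun z : ℝ × ℝ => PsiFun u l x0 (z + x0)) (l • x) := rfl
    rw [e, Measure.integral_comp_smul volume (fun z : ℝ × ℝ => PsiFun u l x0 (z + x0)) l,
      integral_add_right_eq_self (fun z : ℝ × ℝ => PsiFun u l x0 z) x0, hPsi0, smul_zero]
  -- conclusion
  have hgoal : sphInt (fun ω => Real.exp (2 * (u (tauAff l x0 ω) + psiAff l x0 ω)) • ω)
      = (1 / Real.pi) • ∫ x : ℝ × ℝ, ((1 + sq2 x)⁻¹) ^ 2 •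
          (Real.exp (2 * (u (tauAff l x0 (SPinv x)) + psiAff l x0 (SPinv x))) • SPinv x) := rfl
  rw [hgoal]
  have h1 : ∫ x : ℝ × ℝ, ((1 + sq2 x)⁻¹) ^ 2 •
      (Real.exp (2 * (u (tauAff l x0 (SPinv x)) + psiAff l x0 (SPinv x))) • SPinv x)
      = ∫ x : ℝ × ℝ, (l ^ 3 * M⁻¹) • PsiFun u l x0 (l • x + x0) :=
    integral_congr_ae (Filter.Eventually.of_forall key)
  rw [h1, integral_smul, hcv, smul_zero, smul_zero]
end
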